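/- Let φ : ℝ → ℝ be continuous and strictly increasing, K ⊆ ℝ compact, and suppose for every x ∈ K and M > 0 there is ε > 0 such that φ(b) - φ(a) ≥ M(b - a) whenever x - ε < a ≤ b < x + ε. Let ψ be an antiderivative of φ (ψ' = φ). Then for every x ∈ K, lim_{t→0} [(ψ(x + t) - ψ(x))/t - φ(x)]/t = +∞. -/

import Mathlib

theorem stmt_15 (φ ψ : ℝ → ℝ) (hφc : Continuous φ) (hφmono : StrictMono φ)
    (K : Set ℝ) (hK : IsCompact K)
    (hsteep : ∀ x ∈ K, ∀ M > (0:ℝ), ∃ ε > (0:ℝ), ∀ a b : ℝ,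
      x - ε < a → a ≤ b → b < x + ε → M * (b - a) ≤ φ b - φ a)
    (hψ : ∀ x : ℝ, HasDerivAt ψ (φ x) x) :
    ∀ x ∈ K, Filter.Tendsto (fun t : ℝ => ((ψ (x + t) - ψ x) / t - φ x) / t)
      (nhdsWithin 0 {0}ᶜ) Filter.atTop := by
  intro x hx
  rw [Filter.tendsto_atTop]
  intro M
  set c : ℝ := 2 * max M 1 with hc
  have hc1 : M ≤ c / 2 := by
    have := le_max_left M 1; rw [hc]; linarith
  have hcpos : (0:ℝ) < c := by
    have := le_max_right M 1; positivity
  obtain ⟨ε, hε, hst⟩ := hsteep x hx c hcpos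
  have key : ∀ t : ℝ, t ≠ 0 → |t| < ε →
      M ≤ ((ψ (x + t) - ψ x) / t - φ x) / t := by
    intro t ht htε
    have hpsi : ψ (x + t) - ψ x = ∫ s in x..(x+t), φ s := by
      rw [intervalIntegral.integral_eq_sub_of_hasDerivAt (fun s _ => hψ s)
        (hφc.intervalIntegrable _ _)]
    have hint1 : IntervalIntegrable (fun s => φ s - φ x) MeasureTheory.volume x (x+t) :=
      ((hφc.sub continuous_const).intervalIntegrable _ _)
    have hint2 : ∀ a b : ℝ, IntervalIntegrable (fun s => c * (s - x)) MeasureTheory.volume a b :=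
      fun a b => ((continuous_const.mul ((continuous_id.sub continuous_const))).intervalIntegrable _ _)
    have hnum : ψ (x + t) - ψ x - t * φ x = ∫ s in x..(x+t), (φ s - φ x) := by
      rw [intervalIntegral.integral_sub (hφc.intervalIntegrable _ _)
        (intervalIntegrable_const), intervalIntegral.integral_const, hpsi]
      simp
    have hlin : ∀ a b : ℝ, (∫ s in a..b, c * (s - x)) = c * ((b-x)^2 - (a-x)^2) / 2 := by
      intro a b
      rw [intervalIntegral.integral_const_mul]
      have : (∫ s in a..b, (s - x)) = ∫ s in (a-x)..(b-x), s := by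
        simpa using intervalIntegral.integral_comp_sub_right (fun s => s) x
      rw [this, integral_id]; ring
    have hN : c * t^2 / 2 ≤ ∫ s in x..(x+t), (φ s - φ x) := by
      rcases ht.lt_or_gt with htneg | htpos
      · have hle : x + t ≤ x := by linarith
        have hmono : (∫ s in (x+t)..x, (φ s - φ x)) ≤ ∫ s in (x+t)..x, c * (s - x) := by
          apply intervalIntegral.integral_mono_on hle (hint1.symm) (hint2 _ _)
          intro s hs
          have h1 : x - ε < s := by
            have := hs.1
            have : -ε < t := by
              rcases abs_lt.mp htε with ⟨h, _⟩; linarith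
            linarith [hs.1]
          have := hst s x h1 hs.2 (by linarith)
          linarith
        have hval : (∫ s in (x+t)..x, c * (s - x)) = -(c * t^2 / 2) := by
          rw [hlin]; ring
        rw [intervalIntegral.integral_symm]
        rw [hval] at hmono
        linarith
      · have hle : x ≤ x + t := by linarith
        have hmono : (∫ s in x..(x+t), c * (s - x)) ≤ ∫ s in x..(x+t), (φ s - φ x) := by
          apply intervalIntegral.integral_mono_on hle (hint2 _ _) hint1
          intro s hs
          have h2 : s < x + ε := by
            have : t < ε := by rcases abs_lt.mp htε with ⟨_, h⟩; linarith
            linarith [hs.2]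
          have := hst x s (by linarith) hs.1 h2
          linarith
        have hval : (∫ s in x..(x+t), c * (s - x)) = c * t^2 / 2 := by
          rw [hlin]; ring
        linarith
    have ht2 : (0:ℝ) < t^2 := by positivity
    have heq : ((ψ (x + t) - ψ x) / t - φ x) / t = (ψ (x + t) - ψ x - t * φ x) / t^2 := by
      rw [div_sub' ht, div_div, pow_two]
    rw [heq, hnum, le_div_iff₀ ht2]
    calc M * t^2 ≤ (c/2) * t^2 := by nlinarith
      _ = c * t^2 / 2 := by ring
      _ ≤ _ := hN
  have hev : ∀ᶠ t in nhdsWithin (0:ℝ) {0}ᶜ, |t| < ε := by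
    apply Filter.Eventually.filter_mono nhdsWithin_le_nhds
    filter_upwards [Metric.ball_mem_nhds (0:ℝ) hε] with t ht
    simpa [Real.dist_eq] using ht
  have hne : ∀ᶠ t in nhdsWithin (0:ℝ) {0}ᶜ, t ≠ 0 := by
    exact eventually_mem_nhdsWithin.mono (fun t ht => ht)
  filter_upwards [hev, hne] with t h1 h2 using key t h2 h1
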